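/- For a real random variable Y with median μ and density f continuous at μ, the remainder R(y,t) = |y-(μ+t)| - |y-μ| + t·(I{y>μ} - I{y≤μ}) satisfies E[R(Y,t)²] = (4/3) f(μ) |t|³ + o(|t|³) as t → 0. -/

import Mathlib

open MeasureTheory Filter Asymptotics
open Set

lemma R_sq_eq (μ t : ℝ) (R : ℝ → ℝ → ℝ)
    (hR : ∀ y t, R y t = |y - (μ + t)| - |y - μ|
        + t * ((if μ < y then (1:ℝ) else 0) - (if y ≤ μ then (1:ℝ) else 0))) (y : ℝ) :
    (R y t) ^ 2 = (Ioc (min μ (μ+t)) (max μ (μ+t))).indicator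
      (fun y => 4 * (|t| - |y - μ|)^2) y := by
  rw [hR]
  rcases le_or_gt t 0 with ht | ht
  · rw [min_eq_right (by linarith), max_eq_left (by linarith)]
    rcases le_or_gt y (μ + t) with h1 | h1
    · rw [indicator_of_notMem (by simp [h1, Ioc])]
      rw [if_neg (by push_neg; linarith), if_pos (by linarith)]
      rw [abs_of_nonpos (by linarith : y - (μ + t) ≤ 0), abs_of_nonpos (by linarith : y - μ ≤ 0)]
      ring
    · rcases le_or_gt y μ with h2 | h2
      · rw [indicator_of_mem (show y ∈ Ioc _ _ from ⟨h1, h2⟩)]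
        rw [if_neg (by push_neg; linarith), if_pos h2]
        rw [abs_of_nonneg (by linarith : (0:ℝ) ≤ y - (μ + t)), abs_of_nonpos (by linarith : y - μ ≤ 0),
          abs_of_nonpos ht]
        ring
      · rw [indicator_of_notMem (by simp [Ioc]; intro _; linarith)]
        rw [if_pos h2, if_neg (by push_neg; linarith)]
        rw [abs_of_nonneg (by linarith : (0:ℝ) ≤ y - (μ + t)), abs_of_nonneg (by linarith : (0:ℝ) ≤ y - μ)]
        ring
  · rw [min_eq_left (by linarith), max_eq_right (by linarith)]
    rcases le_or_gt y μ with h1 | h1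
    · rw [indicator_of_notMem (by simp [Ioc]; intro h; linarith)]
      rw [if_neg (by push_neg; linarith), if_pos h1]
      rw [abs_of_nonpos (by linarith : y - (μ + t) ≤ 0), abs_of_nonpos (by linarith : y - μ ≤ 0)]
      ring
    · rcases le_or_gt y (μ + t) with h2 | h2
      · rw [indicator_of_mem (show y ∈ Ioc _ _ from ⟨h1, h2⟩)]
        rw [if_pos h1, if_neg (by push_neg; linarith)]
        rw [abs_of_nonpos (by linarith : y - (μ + t) ≤ 0), abs_of_nonneg (by linarith : (0:ℝ) ≤ y - μ),
          abs_of_pos ht]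
        ring
      · rw [indicator_of_notMem (by simp [Ioc]; intro _; linarith)]
        rw [if_pos h1, if_neg (by push_neg; linarith)]
        rw [abs_of_nonneg (by linarith : (0:ℝ) ≤ y - (μ + t)), abs_of_nonneg (by linarith : (0:ℝ) ≤ y - μ)]
        ring

lemma key_int1 (a b : ℝ) (hab : a ≤ b) :
    ∫ y in Ioc a b, 4 * (b - y)^2 = (4/3) * (b - a)^3 := by
  rw [← intervalIntegral.integral_of_le hab]
  have h : ∀ x ∈ uIcc a b, HasDerivAt (fun y => -(4/3) * (b - y)^3) (4 * (b - x)^2) x := by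
    intro x _
    have h1 : HasDerivAt (fun y : ℝ => b - y) (-1) x := (hasDerivAt_id x).const_sub b
    have h2 := (h1.fun_pow 3).const_mul (-(4/3) : ℝ)
    refine h2.congr_deriv ?_
    norm_num
    ring
  rw [intervalIntegral.integral_eq_sub_of_hasDerivAt h
    ((continuous_const.mul ((continuous_const.sub continuous_id).pow 2)).intervalIntegrable a b)]
  ring

lemma key_int2 (a b : ℝ) (hab : a ≤ b) :
    ∫ y in Ioc a b, 4 * (y - a)^2 = (4/3) * (b - a)^3 := by
  rw [← intervalIntegral.integral_of_le hab]
  have h : ∀ x ∈ uIcc a b, HasDerivAt (fun y => (4/3) * (y - a)^3) (4 * (x - a)^2) x := by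
    intro x _
    have h1 : HasDerivAt (fun y : ℝ => y - a) 1 x := (hasDerivAt_id x).sub_const a
    have h2 := (h1.fun_pow 3).const_mul ((4/3) : ℝ)
    refine h2.congr_deriv ?_
    norm_num
    ring
  rw [intervalIntegral.integral_eq_sub_of_hasDerivAt h
    ((continuous_const.mul ((continuous_id.sub continuous_const).pow 2)).intervalIntegrable a b)]
  ring

lemma K_eq (μ t c : ℝ) :
    ∫ y in Ioc (min μ (μ+t)) (max μ (μ+t)), 4 * (|t| - |y - μ|)^2 * c
      = (4/3) * |t|^3 * c := by
  rw [MeasureTheory.integral_mul_const]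
  congr 1
  rcases le_or_gt t 0 with ht | ht
  · rw [min_eq_right (by linarith), max_eq_left (by linarith)]
    rw [setIntegral_congr_fun measurableSet_Ioc
      (g := fun y => 4 * (y - (μ + t))^2) ?_]
    · rw [key_int2 _ _ (by linarith), abs_of_nonpos ht]; ring
    · intro y hy
      obtain ⟨h1, h2⟩ := hy
      dsimp only
      rw [abs_of_nonpos ht, abs_of_nonpos (by linarith : y - μ ≤ 0)]
      ring
  · rw [min_eq_left (by linarith), max_eq_right (by linarith)]
    rw [setIntegral_congr_fun measurableSet_Ioc
      (g := fun y => 4 * ((μ + t) - y)^2) ?_]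
    · rw [key_int1 _ _ (by linarith), abs_of_pos ht]; ring
    · intro y hy
      obtain ⟨h1, h2⟩ := hy
      dsimp only
      rw [abs_of_pos ht, abs_of_nonneg (by linarith : (0:ℝ) ≤ y - μ)]
      ring

/-- Section 3A of Hjort–Pollard: for `Y` with density `f` continuous and
positive at its median `μ`, the remainder
`R(y,t) = |y-(μ+t)| - |y-μ| + t(I{y>μ} - I{y≤μ})` satisfies
`E[R(Y,t)²] = (4/3) f(μ) |t|³ + o(|t|³)` as `t → 0`. -/
theorem median_remainder_second_moment
    {Ω : Type*} [MeasurableSpace Ω] (ℙ : Measure Ω) [IsProbabilityMeasure ℙ]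
    (Y : Ω → ℝ) (hY : Measurable Y)
    (f : ℝ → ℝ) (hf_nonneg : ∀ y, 0 ≤ f y) (hf_meas : Measurable f)
    (hdens : Measure.map Y ℙ = volume.withDensity (fun y => ENNReal.ofReal (f y)))
    (μ : ℝ)
    (hmed : ℙ {ω | Y ω ≤ μ} = 1/2)
    (hf_cont : ContinuousAt f μ) (hf_pos : 0 < f μ)
    (R : ℝ → ℝ → ℝ)
    (hR : ∀ y t, R y t = |y - (μ + t)| - |y - μ|
        + t * ((if μ < y then (1:ℝ) else 0) - (if y ≤ μ then (1:ℝ) else 0))) :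
    (fun t => (∫ ω, (R (Y ω) t) ^ 2 ∂ℙ) - (4/3) * f μ * |t| ^ 3) =o[nhds (0:ℝ)] fun t => |t| ^ 3 := by
  -- integrability of f
  have hprob : IsProbabilityMeasure (Measure.map Y ℙ) := Measure.isProbabilityMeasure_map hY.aemeasurable
  have hlint : ∫⁻ y, ENNReal.ofReal (f y) = 1 := by
    have h1 : (volume.withDensity fun y => ENNReal.ofReal (f y)) Set.univ = 1 := by
      rw [← hdens]; exact measure_univ
    rwa [withDensity_apply _ MeasurableSet.univ, Measure.restrict_univ] at h1
  have hf_int : Integrable f := by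
    refine ⟨hf_meas.aestronglyMeasurable, ?_⟩
    rw [hasFiniteIntegral_iff_ofReal (Filter.Eventually.of_forall hf_nonneg), hlint]
    exact ENNReal.one_lt_top
  -- bounds on interval
  have hmin : ∀ t : ℝ, μ - |t| ≤ min μ (μ + t) := fun t =>
    le_min (by linarith [abs_nonneg t]) (by linarith [neg_abs_le t])
  have hmax : ∀ t : ℝ, max μ (μ + t) ≤ μ + |t| := fun t =>
    max_le (by linarith [abs_nonneg t]) (by linarith [le_abs_self t])
  have hbd : ∀ t : ℝ, ∀ y ∈ Ioc (min μ (μ+t)) (max μ (μ+t)), |y - μ| ≤ |t| := by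
    intro t y hy
    have := hmin t; have := hmax t
    exact abs_le.mpr ⟨by cases hy with | intro h1 h2 => linarith,
      by cases hy with | intro h1 h2 => linarith⟩
  -- measurability of the kernel
  have hker_meas : ∀ t : ℝ, Measurable (fun y => 4 * (|t| - |y - μ|)^2) := by
    intro t; fun_prop
  have hker_cont : ∀ t : ℝ, Continuous (fun y => 4 * (|t| - |y - μ|)^2) := by
    intro t; fun_prop
  -- integrability of the integrand
  have hInt1 : ∀ t : ℝ, IntegrableOn (fun y => 4 * (|t| - |y - μ|)^2 * f y)
      (Ioc (min μ (μ+t)) (max μ (μ+t))) := by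
    intro t
    refine Integrable.mono ((hf_int.restrict).const_mul (4 * t^2))
      (((hker_meas t).mul hf_meas).aestronglyMeasurable) ?_
    rw [ae_restrict_iff' measurableSet_Ioc]
    refine Filter.Eventually.of_forall fun y hy => ?_
    have h1 := hbd t y hy
    have h2 : (0:ℝ) ≤ |t| - |y - μ| := by linarith
    have h3 : (|t| - |y - μ|)^2 ≤ t^2 := by nlinarith [abs_nonneg (y - μ), sq_abs t]
    rw [Real.norm_eq_abs, Real.norm_eq_abs,
      abs_of_nonneg (mul_nonneg (by positivity) (hf_nonneg y) : (0:ℝ) ≤ 4 * (|t| - |y - μ|)^2 * f y),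
      abs_of_nonneg (mul_nonneg (by positivity) (hf_nonneg y) : (0:ℝ) ≤ 4 * t^2 * f y)]
    nlinarith [hf_nonneg y]
  have hInt2 : ∀ t c : ℝ, IntegrableOn (fun y => 4 * (|t| - |y - μ|)^2 * c)
      (Ioc (min μ (μ+t)) (max μ (μ+t))) :=
    fun t c => ((hker_cont t).mul continuous_const).integrableOn_Ioc
  -- moment identity
  have hmoment : ∀ t : ℝ, ∫ ω, (R (Y ω) t)^2 ∂ℙ
      = ∫ y in Ioc (min μ (μ+t)) (max μ (μ+t)), 4 * (|t| - |y - μ|)^2 * f y := by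
    intro t
    have hg : Measurable ((Ioc (min μ (μ+t)) (max μ (μ+t))).indicator
        (fun y => 4 * (|t| - |y - μ|)^2)) := (hker_meas t).indicator measurableSet_Ioc
    calc ∫ ω, (R (Y ω) t)^2 ∂ℙ
        = ∫ ω, (Ioc (min μ (μ+t)) (max μ (μ+t))).indicator
            (fun y => 4 * (|t| - |y - μ|)^2) (Y ω) ∂ℙ := by
          simp only [R_sq_eq μ t R hR]
      _ = ∫ y, (Ioc (min μ (μ+t)) (max μ (μ+t))).indicator
            (fun y => 4 * (|t| - |y - μ|)^2) y ∂(Measure.map Y ℙ) :=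
          (integral_map hY.aemeasurable hg.aestronglyMeasurable).symm
      _ = ∫ y, (f y).toNNReal • (Ioc (min μ (μ+t)) (max μ (μ+t))).indicator
            (fun y => 4 * (|t| - |y - μ|)^2) y := by
          rw [hdens]
          exact integral_withDensity_eq_integral_smul hf_meas.real_toNNReal _
      _ = ∫ y, (Ioc (min μ (μ+t)) (max μ (μ+t))).indicator
            (fun y => 4 * (|t| - |y - μ|)^2 * f y) y := by
          congr 1; funext y
          by_cases h : y ∈ Ioc (min μ (μ+t)) (max μ (μ+t))
          · simp [h, NNReal.smul_def, Real.coe_toNNReal _ (hf_nonneg y), mul_comm]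
          · simp [h]
      _ = ∫ y in Ioc (min μ (μ+t)) (max μ (μ+t)), 4 * (|t| - |y - μ|)^2 * f y :=
          integral_indicator measurableSet_Ioc
  -- difference identity
  have hdiff : ∀ t : ℝ, (∫ ω, (R (Y ω) t)^2 ∂ℙ) - (4/3) * f μ * |t|^3
      = ∫ y in Ioc (min μ (μ+t)) (max μ (μ+t)), 4 * (|t| - |y - μ|)^2 * (f y - f μ) := by
    intro t
    have hc : (4/3) * f μ * |t|^3
        = ∫ y in Ioc (min μ (μ+t)) (max μ (μ+t)), 4 * (|t| - |y - μ|)^2 * f μ := by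
      rw [K_eq μ t (f μ)]; ring
    rw [hmoment t, hc, ← integral_sub (hInt1 t) (hInt2 t (f μ))]
    congr 1; funext y; ring
  -- conclusion
  rw [isLittleO_iff]
  intro c hc
  obtain ⟨δ, hδ, hδ'⟩ := Metric.continuousAt_iff.mp hf_cont (3 * c / 4) (by linarith)
  have hev : ∀ᶠ t in nhds (0:ℝ), |t| < δ := by
    filter_upwards [Metric.ball_mem_nhds (0:ℝ) hδ] with t ht
    simpa [Real.dist_eq] using ht
  filter_upwards [hev] with t ht
  rw [hdiff t]
  have hnorm3 : ‖|t|^3‖ = |t|^3 := by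
    rw [Real.norm_eq_abs]; exact abs_of_nonneg (by positivity)
  rw [hnorm3]
  calc ‖∫ y in Ioc (min μ (μ+t)) (max μ (μ+t)), 4 * (|t| - |y - μ|)^2 * (f y - f μ)‖
      ≤ ∫ y in Ioc (min μ (μ+t)) (max μ (μ+t)), ‖4 * (|t| - |y - μ|)^2 * (f y - f μ)‖ :=
        norm_integral_le_integral_norm _
    _ ≤ ∫ y in Ioc (min μ (μ+t)) (max μ (μ+t)), 4 * (|t| - |y - μ|)^2 * (3 * c / 4) := by
        refine setIntegral_mono_on ((hInt1 t).sub (hInt2 t (f μ)) |>.norm.congr ?_)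
          (hInt2 t (3 * c / 4)) measurableSet_Ioc ?_
        · exact Filter.Eventually.of_forall fun y => by simp [mul_sub]
        · intro y hy
          rw [Real.norm_eq_abs, abs_mul,
            abs_of_nonneg (by positivity : (0:ℝ) ≤ 4 * (|t| - |y - μ|)^2)]
          have h1 : |f y - f μ| ≤ 3 * c / 4 := by
            have := hδ' (show dist y μ < δ from by
              rw [Real.dist_eq]; exact lt_of_le_of_lt (hbd t y hy) ht)
            rw [Real.dist_eq] at this
            linarith
          have h2 : (0:ℝ) ≤ 4 * (|t| - |y - μ|)^2 := by positivity
          exact mul_le_mul_of_nonneg_left h1 h2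
    _ = (4/3) * |t|^3 * (3 * c / 4) := K_eq μ t _
    _ = c * |t|^3 := by ring
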